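/- Let V and T̂ be finite-dimensional real vector spaces and let ω̂ be a T̂-valued polylagrangian (k+1)-form of rank N on V, with polylagrangian subspace L. Then there exists a subspace E of V complementary to L (V = E ⊕ L) which is k-isotropic with respect to ω̂, i.e., i_{v₀} i_{v₁} ⋯ i_{v_k} ω̂ = 0 for all v₀,…,v_k ∈ E. -/

import Mathlib

open Module

/-- `L` is a polylagrangian subspace for the `T`-valued `(k+1)`-form `ω`. -/
def IsPolyLag {V T : Type*} [AddCommGroup V] [Module ℝ V] [AddCommGroup T] [Module ℝ T]
    {k : ℕ} (ω : V [⋀^Fin (k+1)]→ₗ[ℝ] T) (L : Submodule ℝ V) : Prop :=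
  ∀ α : V [⋀^Fin k]→ₗ[ℝ] T,
    (∃ v ∈ L, ∀ x : Fin k → V, ω (Fin.cons v x) = α x)
      ↔ ∀ (x : Fin k → V) (i : Fin k), x i ∈ L → α x = 0

/-- A polylagrangian subspace `L` admits a complementary subspace `E` (`V = E ⊕ L`)
which is `k`-isotropic: `ω` vanishes on any `k+1` vectors of `E`. -/
theorem stmt9 {V T : Type*} [AddCommGroup V] [Module ℝ V] [FiniteDimensional ℝ V]
    [AddCommGroup T] [Module ℝ T] [FiniteDimensional ℝ T] {k N : ℕ} (hk : 1 ≤ k)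
    (ω : V [⋀^Fin (k+1)]→ₗ[ℝ] T) (hω : ω ≠ 0)
    (L : Submodule ℝ V) (hL : IsPolyLag ω L) (hN : Module.finrank ℝ (V ⧸ L) = N) :
    ∃ E : Submodule ℝ V,
      Disjoint E L ∧ E ⊔ L = ⊤
        ∧ ∀ x : Fin (k+1) → V, (∀ i, x i ∈ E) → ω x = 0 := by
  classical
  -- Step 1: ω vanishes when the first argument and one further argument lie in L.
  have lemA : ∀ v ∈ L, ∀ (y : Fin k → V) (m : Fin k), y m ∈ L →
      ω (Fin.cons v y) = 0 := by
    intro v hv y m hy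
    have h := (hL (ω.curryLeft v)).mp ⟨v, hv, fun x => rfl⟩ y m hy
    exact h
  -- Step 2: ω vanishes when two (distinct-index) arguments lie in L.
  have lemB : ∀ (x : Fin (k+1) → V) (i j : Fin (k+1)), i ≠ j → x i ∈ L → x j ∈ L →
      ω x = 0 := by
    intro x i j hij hxi hxj
    set σ : Equiv.Perm (Fin (k+1)) := Equiv.swap 0 i with hσ
    have hσσ : ∀ t, σ (σ t) = t := fun t => Equiv.swap_apply_self 0 i t
    have hj' : σ j ≠ 0 := by
      intro h
      have : j = σ 0 := by rw [← h, hσσ]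
      simp [hσ, Equiv.swap_apply_left] at this
      exact hij this.symm
    have hxσ0 : (x ∘ σ) 0 = x i := by simp [hσ, Equiv.swap_apply_left]
    have hzero : ω (x ∘ σ) = 0 := by
      have e1 : x ∘ σ = Fin.cons (x i) (Fin.tail (x ∘ σ)) := by
        rw [← hxσ0]; exact (Fin.cons_self_tail _).symm
      rw [e1]
      refine lemA (x i) hxi _ ((σ j).pred hj') ?_
      show (x ∘ σ) (((σ j).pred hj').succ) ∈ L
      rw [Fin.succ_pred]
      simpa [Function.comp, hσσ] using hxj
    have hperm := ω.map_perm x σ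
    rw [hzero] at hperm
    rcases Int.units_eq_one_or (Equiv.Perm.sign σ) with h | h <;> rw [h] at hperm
    · simpa using hperm.symm
    · have : -(ω x) = 0 := by simpa [Units.smul_def] using hperm.symm
      exact neg_eq_zero.mp this
  -- Choose a complement E₀ of L and the projection π onto E₀ along L.
  obtain ⟨E₀, hE₀⟩ := Submodule.exists_isCompl L
  set π : V →ₗ[ℝ] V := E₀.subtype ∘ₗ (E₀.linearProjOfIsCompl L hE₀.symm) with hπdef
  have hπL : ∀ v ∈ L, π v = 0 := by
    intro v hv
    simp [hπdef, Submodule.linearProjOfIsCompl, Submodule.projectionOnto_apply_of_mem_right hE₀.symm hv]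
  have hππ : ∀ v, π (π v) = π v := by
    intro v
    simp [hπdef, Submodule.linearProjOfIsCompl, Submodule.projectionOnto_projection]
  have hsub : ∀ v, v - π v ∈ L := by
    intro v
    have h := Submodule.projection_add_projection_eq_self hE₀.symm v
    have heq : v - π v = (L.linearProjOfIsCompl E₀ hE₀.symm.symm v : V) := by
      rw [hπdef]
      simp only [LinearMap.comp_apply, Submodule.subtype_apply]
      rw [sub_eq_iff_eq_add]
      rw [add_comm]
      exact h.symm
    rw [heq]; exact Submodule.coe_mem _
  -- The constant `c = -1/(k+1)`.
  set c : ℝ := -(((k : ℝ) + 1)⁻¹) with hc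
  -- The linear map `e ↦ c • i_{π e}(ω ∘ π)`.
  set A : V →ₗ[ℝ] (V [⋀^Fin k]→ₗ[ℝ] T) := c • (ω.compLinearMap π).curryLeft with hA
  have hAapp : ∀ (e : V) (y : Fin k → V), A e y = c • ω (Fin.cons (π e) (π ∘ y)) := by
    intro e y
    show c • ((ω.compLinearMap π).curryLeft e) y = _
    congr 1
    show (ω.compLinearMap π) (Matrix.vecCons e y) = _
    rw [AlternatingMap.compLinearMap_apply]
    congr 1
    exact Fin.comp_cons π e y
  have hA0 : ∀ e, π e = 0 → A e = 0 := by
    intro e he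
    ext y
    rw [hAapp, he]
    have h0 : ω (Fin.cons (0 : V) (π ∘ y)) = 0 :=
      ω.toMultilinearMap.map_coord_zero (0 : Fin (k + 1)) (by simp)
    simp [h0]
  set Φ : L →ₗ[ℝ] (V [⋀^Fin k]→ₗ[ℝ] T) := ω.curryLeft ∘ₗ L.subtype with hΦ
  have hΦapp : ∀ (w : L) (y : Fin k → V), Φ w y = ω (Fin.cons (w : V) y) := fun w y => rfl
  have hmem : ∀ e, A e ∈ LinearMap.range Φ := by
    intro e
    have hhor : ∀ (y : Fin k → V) (m : Fin k), y m ∈ L → A e y = 0 := by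
      intro y m hy
      rw [hAapp]
      have hz : (Fin.cons (π e) (⇑π ∘ y) : Fin (k+1) → V) m.succ = 0 := by
        rw [Fin.cons_succ]
        exact hπL _ hy
      have h0 : ω (Fin.cons (π e) (⇑π ∘ y)) = 0 :=
        ω.toMultilinearMap.map_coord_zero m.succ hz
      simp [h0]
    obtain ⟨v, hv, hve⟩ := (hL (A e)).mpr hhor
    exact ⟨⟨v, hv⟩, by ext y; exact hve y⟩
  obtain ⟨g, hg⟩ := Φ.rangeRestrict.exists_rightInverse_of_surjective
    (LinearMap.range_rangeRestrict Φ)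
  set φ : V →ₗ[ℝ] L := g ∘ₗ (A.codRestrict (LinearMap.range Φ) hmem) with hφ
  have hΦφ : ∀ e, Φ (φ e) = A e := by
    intro e
    have h1 := congrArg Subtype.val (LinearMap.congr_fun hg
      ((A.codRestrict (LinearMap.range Φ) hmem) e))
    simp at h1; exact h1
  have hφ0 : ∀ e, π e = 0 → φ e = 0 := by
    intro e he
    have h1 : (A.codRestrict (LinearMap.range Φ) hmem) e = 0 := by
      apply Subtype.ext
      simp [hA0 e he]
    show g ((A.codRestrict (LinearMap.range Φ) hmem) e) = 0
    rw [h1, map_zero]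
  set f : V →ₗ[ℝ] V := π + L.subtype ∘ₗ φ with hf
  have hfapp : ∀ v, f v = π v + (φ v : V) := fun v => rfl
  have hπf : ∀ v, π (f v) = π v := by
    intro v
    rw [hfapp, map_add, hππ, hπL _ (φ v).2, add_zero]
  refine ⟨LinearMap.range f, ?_, ?_, ?_⟩
  · -- Disjointness
    rw [Submodule.disjoint_def]
    rintro x ⟨v, rfl⟩ hxL
    have hπv : π v = 0 := by rw [← hπf v]; exact hπL _ hxL
    rw [hfapp, hπv, hφ0 v hπv]
    simp
  · -- Spanning
    rw [eq_top_iff]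
    intro v _
    have hmem' : v - f v ∈ L := by
      have : v - f v = (v - π v) - (φ v : V) := by rw [hfapp]; abel
      rw [this]
      exact Submodule.sub_mem L (hsub v) (φ v).2
    have : v = f v + (v - f v) := by abel
    rw [this]
    exact Submodule.add_mem_sup ⟨v, rfl⟩ hmem'
  · -- Isotropy
    intro x hx
    choose v hv using hx
    set a : Fin (k+1) → V := fun i => π (v i) with ha
    set b : Fin (k+1) → V := fun i => (φ (v i) : V) with hb
    have hxab : x = fun i => a i + b i := by
      funext i
      rw [← hv i, hfapp]
    have hbL : ∀ i, b i ∈ L := fun i => (φ (v i)).2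
    have hπa : ∀ i, π (a i) = a i := fun i => hππ (v i)
    have hkey : ∀ (i : Fin (k+1)) (y : Fin k → V),
        ω (Fin.cons (b i) y) = c • ω (Fin.cons (a i) (π ∘ y)) := by
      intro i y
      have h1 : Φ (φ (v i)) y = A (v i) y := by rw [hΦφ]
      rw [hΦapp, hAapp] at h1
      exact h1
    have lemC : ∀ i : Fin (k+1), ω (Function.update a i (b i)) = c • ω a := by
      intro i
      set σ : Equiv.Perm (Fin (k+1)) := Equiv.swap 0 i with hσ
      set u : Fin (k+1) → V := Function.update a i (b i) with hu
      have hσσ : ∀ t, σ (σ t) = t := fun t => Equiv.swap_apply_self 0 i t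
      have hσ0 : σ 0 = i := Equiv.swap_apply_left 0 i
      have hu0 : (u ∘ σ) 0 = b i := by
        show u (σ 0) = b i
        rw [hσ0, hu, Function.update_self]
      have htail : ∀ m : Fin k, u (σ m.succ) = a (σ m.succ) := by
        intro m
        have hne : σ m.succ ≠ i := by
          intro hcon
          have h2 : (m.succ : Fin (k+1)) = σ i := by rw [← hcon, hσσ]
          rw [← hσ0, hσσ] at h2
          exact Fin.succ_ne_zero m h2
        rw [hu, Function.update_of_ne hne]
      have h1 : ω (u ∘ σ) = c • ω (a ∘ σ) := by
        have e1 : u ∘ σ = Fin.cons (b i) (Fin.tail (u ∘ σ)) := by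
          rw [← hu0]; exact (Fin.cons_self_tail _).symm
        rw [e1, hkey i]
        have e2 : Fin.cons (a i) (⇑π ∘ Fin.tail (u ∘ ⇑σ)) = a ∘ ⇑σ := by
          funext j
          refine Fin.cases ?_ (fun m => ?_) j
          · simp only [Fin.cons_zero, Function.comp_apply, hσ0]
          · simp only [Fin.cons_succ, Function.comp_apply, Fin.tail]
            rw [htail m, hπa]
        rw [e2]
      have h2 := ω.map_perm u σ
      rw [h1, ω.map_perm a σ] at h2
      rcases Int.units_eq_one_or (Equiv.Perm.sign σ) with h | h <;> rw [h] at h2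
      · simpa using h2.symm
      · have h3 : c • (-(ω a)) = -(ω u) := by
          simpa [Units.smul_def] using h2
        rw [smul_neg] at h3
        exact (neg_inj.mp h3).symm
    have hsum : ω x = ∑ s : Finset (Fin (k+1)), ω (s.piecewise a b) := by
      rw [hxab]
      exact ω.toMultilinearMap.map_add_univ a b
    set S : Finset (Finset (Fin (k+1))) :=
      insert Finset.univ (Finset.univ.image (fun i : Fin (k+1) => Finset.univ.erase i)) with hS
    have hvan : ∀ s : Finset (Fin (k+1)), s ∉ S → ω (s.piecewise a b) = 0 := by
      intro s hs
      rw [hS, Finset.mem_insert] at hs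
      push_neg at hs
      obtain ⟨hs1, hs2⟩ := hs
      have h1 : ∃ i, i ∉ s := by
        by_contra h
        push_neg at h
        exact hs1 (Finset.eq_univ_iff_forall.mpr h)
      obtain ⟨i, hi⟩ := h1
      have h2 : ∃ j, j ≠ i ∧ j ∉ s := by
        by_contra h
        push_neg at h
        apply hs2
        refine Finset.mem_image.mpr ⟨i, Finset.mem_univ i, ?_⟩
        ext t
        simp only [Finset.mem_erase, Finset.mem_univ, and_true]
        constructor
        · intro ht
          exact h t ht
        · intro ht
          intro hcon
          exact hi (hcon ▸ ht)
      obtain ⟨j, hji, hj⟩ := h2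
      refine lemB _ j i hji ?_ ?_
      · rw [Finset.piecewise_eq_of_notMem _ _ _ hj]; exact hbL j
      · rw [Finset.piecewise_eq_of_notMem _ _ _ hi]; exact hbL i
    have hsum2 : ∑ s : Finset (Fin (k+1)), ω (s.piecewise a b)
        = ∑ s ∈ S, ω (s.piecewise a b) :=
      (Finset.sum_subset (Finset.subset_univ S) (fun s _ hs => hvan s hs)).symm
    have hnu : (Finset.univ : Finset (Fin (k+1)))
        ∉ Finset.univ.image (fun i : Fin (k+1) => Finset.univ.erase i) := by
      intro hmem2
      obtain ⟨i, -, hi⟩ := Finset.mem_image.mp hmem2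
      have : i ∈ Finset.univ.erase i := hi.symm ▸ Finset.mem_univ i
      exact (Finset.notMem_erase i _) this
    have hinj : ∀ i ∈ (Finset.univ : Finset (Fin (k+1))), ∀ j ∈ Finset.univ,
        Finset.univ.erase i = Finset.univ.erase j → i = j := by
      intro i _ j _ hij
      by_contra hne
      have : i ∈ Finset.univ.erase j := Finset.mem_erase.mpr ⟨hne, Finset.mem_univ i⟩
      rw [← hij] at this
      exact (Finset.notMem_erase i _) this
    have hup : ∀ i : Fin (k+1),
        (Finset.univ.erase i).piecewise a b = Function.update a i (b i) := by
      intro i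
      funext t
      by_cases h : t = i
      · subst h
        rw [Finset.piecewise_eq_of_notMem _ _ _ (Finset.notMem_erase t _),
          Function.update_self]
      · rw [Finset.piecewise_eq_of_mem _ _ _ (Finset.mem_erase.mpr ⟨h, Finset.mem_univ t⟩),
          Function.update_of_ne h]
    rw [hsum, hsum2, hS, Finset.sum_insert hnu, Finset.sum_image hinj]
    have hterm : ∀ i : Fin (k+1), ω ((Finset.univ.erase i).piecewise a b) = c • ω a := by
      intro i
      rw [hup i]
      exact lemC i
    rw [Finset.sum_congr rfl (fun i _ => hterm i), Finset.sum_const, Finset.card_univ,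
      Fintype.card_fin]
    have hpu : (Finset.univ : Finset (Fin (k+1))).piecewise a b = a := by
      funext t
      exact Finset.piecewise_eq_of_mem _ _ _ (Finset.mem_univ t)
    rw [hpu]
    have hne : ((k : ℝ) + 1) ≠ 0 := by positivity
    have hnsmul : (k+1) • (c • ω a) = -(ω a) := by
      rw [← Nat.cast_smul_eq_nsmul ℝ, smul_smul]
      have : ((k+1 : ℕ) : ℝ) * c = -1 := by
        rw [hc]
        push_cast
        field_simp
      rw [this, neg_one_smul]
    rw [hnsmul, add_neg_cancel]
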